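/- The σ-ideal M of meager subsets of the Hilbert cube I^ω is a maximal non-trivial topologically invariant ideal with BP-base on I^ω: if I is a non-trivial topologically invariant ideal on I^ω which has a BP-base and contains M, then I = M. -/

import Mathlib

open Set Topology Cardinal

/-- The Hilbert cube `[0,1]^ℕ` with the product topology. -/
abbrev HilbertCube : Type := ℕ → ↥(Set.Icc (0:ℝ) 1)

/-- An ideal of subsets: a nonempty family closed under subsets and finite unions. -/
def IsIdeal {X : Type*} (I : Set (Set X)) : Prop :=
  I.Nonempty ∧ (∀ A ∈ I, ∀ B, B ⊆ A → B ∈ I) ∧ (∀ A ∈ I, ∀ B ∈ I, A ∪ B ∈ I)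

/-- A σ-ideal: an ideal closed under countable unions. -/
def IsSigmaIdeal {X : Type*} (I : Set (Set X)) : Prop :=
  IsIdeal I ∧ ∀ A : ℕ → Set X, (∀ n, A n ∈ I) → (⋃ n, A n) ∈ I

/-- A non-trivial ideal contains an uncountable set but not the whole space. -/
def NontrivialIdeal {X : Type*} (I : Set (Set X)) : Prop :=
  (∃ A ∈ I, ¬ A.Countable) ∧ Set.univ ∉ I

/-- An ideal on a topological space is topologically invariant if it is preserved by
all homeomorphisms of the space. -/
def TopInvariant {X : Type*} [TopologicalSpace X] (I : Set (Set X)) : Prop :=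
  ∀ h : X ≃ₜ X, {B | ∃ A ∈ I, B = h '' A} = I

/-- `I` has a base all of whose members satisfy `P`. -/
def HasBaseWith {X : Type*} (I : Set (Set X)) (P : Set X → Prop) : Prop :=
  ∃ B ⊆ I, (∀ A ∈ I, ∃ C ∈ B, A ⊆ C) ∧ ∀ C ∈ B, P C

/-- A set has the Baire property if it differs from some open set by a meager set. -/
def HasBaireProperty {X : Type*} [TopologicalSpace X] (A : Set X) : Prop :=
  ∃ U : Set X, IsOpen U ∧ IsMeagre ((A \ U) ∪ (U \ A))

/-- The σ-ideal of meager subsets of a topological space. -/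
def MeagerIdeal (X : Type*) [TopologicalSpace X] : Set (Set X) := {A | IsMeagre A}

/-- The σ-ideal generated by a family `F`: all subsets of countable unions of members
of `F`. -/
def sigmaGenerated {X : Type*} (F : Set (Set X)) : Set (Set X) :=
  {A | ∃ S : ℕ → Set X, (∀ n, S n ∈ F) ∧ A ⊆ ⋃ n, S n}

/-- A Cantor set in the Hilbert cube: a subset homeomorphic to the Cantor cube. -/
def IsCantorSet (C : Set HilbertCube) : Prop := Nonempty (C ≃ₜ (ℕ → Bool))

/-- A minimal Cantor set: one that can be mapped into any other Cantor set by an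
ambient homeomorphism. -/
def IsMinimalCantorSet (A : Set HilbertCube) : Prop :=
  IsCantorSet A ∧ ∀ B : Set HilbertCube, IsCantorSet B →
    ∃ h : HilbertCube ≃ₜ HilbertCube, h '' A ⊆ B

/-- The family of all minimal Cantor sets in the Hilbert cube. -/
def CantorFamily : Set (Set HilbertCube) := {A | IsMinimalCantorSet A}

/-- The σ-ideal generated by minimal Cantor sets. -/
def sigmaC0 : Set (Set HilbertCube) := sigmaGenerated CantorFamily

/-- A minimal dense Gδ-subset of the Hilbert cube. -/
def IsMinimalDenseGdelta (A : Set HilbertCube) : Prop :=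
  IsGδ A ∧ Dense A ∧ ∀ B : Set HilbertCube, IsGδ B → Dense B →
    ∃ h : HilbertCube ≃ₜ HilbertCube, h '' A ⊆ B

/-- The family of all minimal dense Gδ-sets in the Hilbert cube. -/
def GdeltaFamily : Set (Set HilbertCube) := {A | IsMinimalDenseGdelta A}

/-- The σ-ideal generated by minimal dense Gδ-sets. -/
def sigmaG0 : Set (Set HilbertCube) := sigmaGenerated GdeltaFamily

/-- `cov(I)`: the least cardinality of a subfamily of `I` covering the space. -/
noncomputable def covIdeal {X : Type*} (I : Set (Set X)) : Cardinal :=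
  sInf {c | ∃ A : Set (Set X), A ⊆ I ∧ ⋃₀ A = Set.univ ∧ c = #A}

/-- `non(I)`: the least cardinality of a subset of the space not in `I`. -/
noncomputable def nonIdeal {X : Type*} (I : Set (Set X)) : Cardinal :=
  sInf {c | ∃ A : Set X, A ∉ I ∧ c = #A}

/-- `add(I,J)`: the least cardinality of a subfamily of `I` whose union is not in `J`. -/
noncomputable def addIdeal2 {X : Type*} (I J : Set (Set X)) : Cardinal :=
  sInf {c | ∃ A : Set (Set X), A ⊆ I ∧ ⋃₀ A ∉ J ∧ c = #A}

/-- `add(I) = add(I,I)`. -/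
noncomputable def addIdeal {X : Type*} (I : Set (Set X)) : Cardinal := addIdeal2 I I

/-- `cof(I,J)`: the least cardinality of a subfamily of `J` cofinal in `I`. -/
noncomputable def cofIdeal2 {X : Type*} (I J : Set (Set X)) : Cardinal :=
  sInf {c | ∃ A : Set (Set X), A ⊆ J ∧ (∀ B ∈ I, ∃ C ∈ A, B ⊆ C) ∧ c = #A}

/-- `cof(I) = cof(I,I)`. -/
noncomputable def cofIdeal {X : Type*} (I : Set (Set X)) : Cardinal := cofIdeal2 I I

/-- The compact-open topology on the homeomorphism group of a space, induced by the
compact-open topology of the space of continuous self-maps. -/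
noncomputable instance homeoGroupTopology (X : Type*) [TopologicalSpace X] :
    TopologicalSpace (X ≃ₜ X) :=
  TopologicalSpace.induced (fun h : X ≃ₜ X => (⟨h, h.continuous⟩ : C(X, X)))
    ContinuousMap.compactOpen

/-- A Z-set: a closed set `A` such that for every open cover `U` of the space there is a
continuous map into the complement of `A` which is `U`-near to the identity. -/
def IsZSet {X : Type*} [TopologicalSpace X] (A : Set X) : Prop :=
  IsClosed A ∧ ∀ U : Set (Set X), (∀ V ∈ U, IsOpen V) → ⋃₀ U = Set.univ →
    ∃ f : C(X, X), (∀ x, f x ∉ A) ∧ ∀ x : X, ∃ V ∈ U, x ∈ V ∧ f x ∈ V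

/-- A σZ-set: a countable union of Z-sets. -/
def IsSigmaZSet {X : Type*} [TopologicalSpace X] (A : Set X) : Prop :=
  ∃ Z : ℕ → Set X, (∀ n, IsZSet (Z n)) ∧ A = ⋃ n, Z n

/-- The cube `[0,1]^n`. -/
abbrev FinCube (n : ℕ) : Type := Fin n → ↥(Set.Icc (0:ℝ) 1)

/-- A `Z_n`-set in the Hilbert cube: a closed set `A` such that maps avoiding `A` are
dense in the space `C([0,1]^n, I^ω)` with the compact-open topology. -/
def IsZnSet (n : ℕ) (A : Set HilbertCube) : Prop :=
  IsClosed A ∧ Dense {f : C(FinCube n, HilbertCube) | ∀ x, f x ∉ A}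

/-- A `Z_ω`-set in the Hilbert cube: a closed set which is a `Z_n`-set for all `n`. -/
def IsZomegaSet (A : Set HilbertCube) : Prop :=
  IsClosed A ∧ ∀ n : ℕ, IsZnSet n A

/-- Covering dimension of a space is at most `n`: every finite open cover has a finite
open refinement (still a cover) in which no point belongs to more than `n+1` members. -/
def CovDimLE (Y : Type*) [TopologicalSpace Y] (n : ℕ) : Prop :=
  ∀ U : Set (Set Y), U.Finite → (∀ V ∈ U, IsOpen V) → ⋃₀ U = Set.univ →
    ∃ V : Set (Set Y), V.Finite ∧ (∀ W ∈ V, IsOpen W) ∧ ⋃₀ V = Set.univ ∧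
      (∀ W ∈ V, ∃ W' ∈ U, W ⊆ W') ∧
      ∀ y : Y, {W ∈ V | y ∈ W}.ncard ≤ n + 1

/-- A `G_δ`-generated topologically invariant ideal on the Hilbert cube. -/
def GdeltaGenerated (I : Set (Set HilbertCube)) : Prop :=
  HasBaseWith I IsSigmaCompact ∧
  ∃ G : Set HilbertCube, IsGδ G ∧
    (∀ K : Set HilbertCube, K ⊆ G → IsCompact K → K ∈ I) ∧
    ∀ A ∈ I, IsCompact A →
      Dense {h : HilbertCube ≃ₜ HilbertCube | h '' A ⊆ G}

/-- A `G_δ*`-generated ideal: a preimage of a `G_δ`-generated ideal under an embedding. -/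
def GdeltaStarGenerated (I : Set (Set HilbertCube)) : Prop :=
  ∃ I' : Set (Set HilbertCube), GdeltaGenerated I' ∧
    ∃ e : HilbertCube → HilbertCube, IsEmbedding e ∧ I = {S | ∃ A ∈ I', S = e ⁻¹' A}

/-- A `σG_δ*`-generated ideal. -/
def SigmaGdeltaStarGenerated (I : Set (Set HilbertCube)) : Prop :=
  ∃ In : ℕ → Set (Set HilbertCube), (∀ n, GdeltaStarGenerated (In n)) ∧
    (∀ n, In n ⊆ I) ∧
    ∀ A ∈ I, ∃ K : ℕ → Set HilbertCube,
      (∀ n, IsCompact (K n) ∧ K n ∈ In n) ∧ A ⊆ ⋃ n, K n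

/-- The σ-ideal of meager subsets of the Hilbert cube is a maximal non-trivial
topologically invariant ideal with BP-base on `I^ω`. -/
abbrev UI : Type := ↥(Set.Icc (0:ℝ) 1)

/-- the PL function on ℝ: two-piece linear map with (0,0),(a,t),(1,1) knots. -/
noncomputable def plFun (a t : ℝ) (s : ℝ) : ℝ :=
  if s ≤ a then s * t / a else t + (s - a) * (1 - t) / (1 - a)

lemma plFun_cont (a t : ℝ) (ha : 0 < a) : Continuous (plFun a t) := by
  apply Continuous.if_le (by fun_prop) (by fun_prop) continuous_id continuous_const
  intro x hx
  simp only [id] at hx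
  subst hx
  have hx0 : x ≠ 0 := ne_of_gt ha
  field_simp
  simp

lemma plFun_inv (a t : ℝ) (ha : a ∈ Set.Ioo (0:ℝ) 1) (ht : t ∈ Set.Ioo (0:ℝ) 1) :
    ∀ s, plFun a t (plFun t a s) = s := by
  obtain ⟨ha0, ha1⟩ := ha; obtain ⟨ht0, ht1⟩ := ht
  have ha' : a ≠ 0 := ne_of_gt ha0
  have ht' : t ≠ 0 := ne_of_gt ht0
  have ha1' : (1:ℝ) - a ≠ 0 := by intro h; apply absurd ha1; linarith [h]
  have ht1' : (1:ℝ) - t ≠ 0 := by intro h; apply absurd ht1; linarith [h]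
  intro s
  unfold plFun
  by_cases h : s ≤ t
  · rw [if_pos h]
    have h2 : s * a / t ≤ a := by
      rw [div_le_iff₀ ht0]
      nlinarith
    rw [if_pos h2]
    field_simp
  · rw [if_neg h]
    push_neg at h
    have h2 : ¬ (a + (s - t) * (1 - a) / (1 - t) ≤ a) := by
      push_neg
      have : 0 < (s - t) * (1 - a) / (1 - t) :=
        div_pos (mul_pos (by linarith) (by linarith)) (by linarith)
      linarith
    rw [if_neg h2]
    have e1 : a + (s - t) * (1 - a) / (1 - t) - a = (s - t) * (1 - a) / (1 - t) := by ring
    rw [e1]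
    field_simp
    ring

lemma plFun_maps (a t : ℝ) (ha : a ∈ Set.Ioo (0:ℝ) 1) (ht : t ∈ Set.Ioo (0:ℝ) 1) :
    ∀ s ∈ Set.Icc (0:ℝ) 1, plFun a t s ∈ Set.Icc (0:ℝ) 1 := by
  obtain ⟨ha0, ha1⟩ := ha; obtain ⟨ht0, ht1⟩ := ht
  rintro s ⟨hs0, hs1⟩
  unfold plFun
  by_cases h : s ≤ a
  · rw [if_pos h]
    constructor
    · positivity
    · rw [div_le_one ha0]; nlinarith
  · rw [if_neg h]
    push_neg at h
    constructor
    · have : 0 ≤ (s - a) * (1 - t) / (1 - a) := by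
        apply div_nonneg (by nlinarith) (by linarith)
      linarith
    · rw [← sub_nonneg]
      have : (s - a) * (1 - t) / (1 - a) ≤ 1 - t := by
        rw [div_le_iff₀ (by linarith)]
        nlinarith
      linarith

lemma plFun_apply_a (a t : ℝ) (ha0 : a ≠ 0) : plFun a t a = t := by
  unfold plFun; rw [if_pos le_rfl]; field_simp

/-- PL homeomorphism of [0,1] taking a to t, for interior a t. -/
noncomputable def plHomeo (a t : ℝ) (ha : a ∈ Set.Ioo (0:ℝ) 1) (ht : t ∈ Set.Ioo (0:ℝ) 1) :
    UI ≃ₜ UI where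
  toFun s := ⟨plFun a t s, plFun_maps a t ha ht s s.2⟩
  invFun s := ⟨plFun t a s, plFun_maps t a ht ha s s.2⟩
  left_inv s := by ext; exact plFun_inv t a ht ha s
  right_inv s := by ext; exact plFun_inv a t ha ht s
  continuous_toFun := by
    apply Continuous.subtype_mk
    exact (plFun_cont a t ha.1).comp continuous_subtype_val
  continuous_invFun := by
    apply Continuous.subtype_mk
    exact (plFun_cont t a ht.1).comp continuous_subtype_val

lemma plHomeo_apply (a t : ℝ) (ha : a ∈ Set.Ioo (0:ℝ) 1) (ht : t ∈ Set.Ioo (0:ℝ) 1)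
    (x : UI) (hx : (x:ℝ) = a) : ((plHomeo a t ha ht x : UI) : ℝ) = t := by
  show plFun a t x = t
  rw [hx, plFun_apply_a a t (ne_of_gt ha.1)]

/-- flip homeomorphism of [0,1]. -/
noncomputable def flipHomeo : UI ≃ₜ UI where
  toFun s := ⟨1 - s, by constructor <;> [linarith [s.2.2]; linarith [s.2.1]]⟩
  invFun s := ⟨1 - s, by constructor <;> [linarith [s.2.2]; linarith [s.2.1]]⟩
  left_inv s := by ext; simp
  right_inv s := by ext; simp
  continuous_toFun := by
    apply Continuous.subtype_mk; fun_prop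
  continuous_invFun := by
    apply Continuous.subtype_mk; fun_prop

lemma flipHomeo_apply (x : UI) : ((flipHomeo x : UI) : ℝ) = 1 - x := rfl

noncomputable section

/-- sup norm on ℝ² -/
def Nm (v : ℝ × ℝ) : ℝ := max |v.1| |v.2|

lemma Nm_nonneg (v : ℝ × ℝ) : 0 ≤ Nm v := le_trans (abs_nonneg _) (le_max_left _ _)

lemma Nm_eq_zero {v : ℝ × ℝ} (h : Nm v = 0) : v = 0 := by
  have h1 : |v.1| ≤ 0 := h ▸ le_max_left _ _
  have h2 : |v.2| ≤ 0 := h ▸ le_max_right _ _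
  have : v.1 = 0 := abs_nonpos_iff.mp h1
  have : v.2 = 0 := abs_nonpos_iff.mp h2
  exact Prod.ext ‹v.1 = 0› ‹v.2 = 0›

lemma Nm_pos {v : ℝ × ℝ} (h : v ≠ 0) : 0 < Nm v :=
  lt_of_le_of_ne (Nm_nonneg v) (fun e => h (Nm_eq_zero e.symm))

lemma Nm_smul (c : ℝ) (hc : 0 ≤ c) (v : ℝ × ℝ) : Nm (c • v) = c * Nm v := by
  simp only [Nm, Prod.smul_fst, Prod.smul_snd, smul_eq_mul, abs_mul, abs_of_nonneg hc]
  rw [← mul_max_of_nonneg _ _ hc]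

lemma Nm_fst_le (v : ℝ × ℝ) : |v.1| ≤ Nm v := le_max_left _ _
lemma Nm_snd_le (v : ℝ × ℝ) : |v.2| ≤ Nm v := le_max_right _ _

lemma Nm_cont : Continuous Nm := (continuous_fst.abs).max (continuous_snd.abs)

lemma dist_zero_Nm (v : ℝ × ℝ) : dist v 0 = Nm v := by
  rw [Prod.dist_eq]
  simp [Real.dist_eq, Nm]

/-- rotation-like linear maps -/
def Rm (v : ℝ × ℝ) : ℝ × ℝ := (v.1 - v.2, v.1 + v.2)
def Sm (v : ℝ × ℝ) : ℝ × ℝ := (v.1 + v.2, v.2 - v.1)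

lemma Rm_Sm (w : ℝ × ℝ) : Rm (Sm w) = (2:ℝ) • w := by
  refine Prod.ext ?_ ?_ <;>
    simp only [Rm, Sm, Prod.smul_fst, Prod.smul_snd, Prod.smul_mk, smul_eq_mul] <;> ring

lemma Sm_Rm (w : ℝ × ℝ) : Sm (Rm w) = (2:ℝ) • w := by
  refine Prod.ext ?_ ?_ <;>
    simp only [Rm, Sm, Prod.smul_fst, Prod.smul_snd, Prod.smul_mk, smul_eq_mul] <;> ring

lemma Rm_smul (c : ℝ) (v : ℝ × ℝ) : Rm (c • v) = c • Rm v := by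
  refine Prod.ext ?_ ?_ <;>
    simp only [Rm, Prod.smul_fst, Prod.smul_snd, Prod.smul_mk, smul_eq_mul] <;> ring

lemma Sm_smul (c : ℝ) (v : ℝ × ℝ) : Sm (c • v) = c • Sm v := by
  refine Prod.ext ?_ ?_ <;>
    simp only [Sm, Prod.smul_fst, Prod.smul_snd, Prod.smul_mk, smul_eq_mul] <;> ring

lemma Rm_cont : Continuous Rm := by unfold Rm; fun_prop
lemma Sm_cont : Continuous Sm := by unfold Sm; fun_prop

lemma Rm_ne_zero {v : ℝ × ℝ} (h : v ≠ 0) : Rm v ≠ 0 := by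
  intro e
  apply h
  have := Sm_Rm v
  rw [e] at this
  simp only [Sm, Prod.fst_zero, Prod.snd_zero] at this
  have h2 : (2:ℝ) • v = 0 := by
    rw [← this]; exact Prod.ext (by norm_num) (by norm_num)
  simpa using (smul_eq_zero.mp h2).resolve_left (by norm_num)

lemma Sm_ne_zero {v : ℝ × ℝ} (h : v ≠ 0) : Sm v ≠ 0 := by
  intro e
  apply h
  have := Rm_Sm v
  rw [e] at this
  simp only [Rm, Prod.fst_zero, Prod.snd_zero] at this
  have h2 : (2:ℝ) • v = 0 := by
    rw [← this]; exact Prod.ext (by norm_num) (by norm_num)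
  simpa using (smul_eq_zero.mp h2).resolve_left (by norm_num)

/-- the sup-norm-radial map associated to T -/
def gmap (T : ℝ × ℝ → ℝ × ℝ) (v : ℝ × ℝ) : ℝ × ℝ :=
  if v = 0 then 0 else (Nm v / Nm (T v)) • T v

lemma gmap_Nm {T : ℝ × ℝ → ℝ × ℝ} (hT : ∀ v : ℝ × ℝ, v ≠ 0 → T v ≠ 0) (v : ℝ × ℝ) :
    Nm (gmap T v) = Nm v := by
  unfold gmap
  by_cases h : v = 0
  · rw [if_pos h, h]
  · rw [if_neg h]
    have hTv : Nm (T v) ≠ 0 := ne_of_gt (Nm_pos (hT v h))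
    rw [Nm_smul _ (div_nonneg (Nm_nonneg v) (Nm_nonneg (T v))) _]
    field_simp

lemma gmap_cont {T : ℝ × ℝ → ℝ × ℝ} (hTc : Continuous T)
    (hT : ∀ v : ℝ × ℝ, v ≠ 0 → T v ≠ 0) : Continuous (gmap T) := by
  rw [continuous_iff_continuousAt]
  intro v
  by_cases h : v = 0
  · subst h
    rw [ContinuousAt, Metric.tendsto_nhds]
    intro ε hε
    rw [Metric.eventually_nhds_iff]
    refine ⟨ε, hε, fun {w} hw => ?_⟩
    have : gmap T 0 = 0 := by unfold gmap; simp
    rw [this, dist_zero_Nm, gmap_Nm hT, ← dist_zero_Nm]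
    simpa using hw
  · have hopen : IsOpen {w : ℝ × ℝ | w ≠ 0} := isOpen_compl_singleton
    apply ContinuousAt.congr
      (f := fun w => (Nm w / Nm (T w)) • T w)
    · apply ContinuousAt.fun_smul
      · refine ContinuousAt.div (f := Nm) (g := fun w => Nm (T w)) ?_ ?_ ?_
        · exact Nm_cont.continuousAt
        · exact (Nm_cont.comp hTc).continuousAt
        · exact ne_of_gt (Nm_pos (hT v h))
      · exact hTc.continuousAt
    · rw [Filter.eventuallyEq_iff_exists_mem]
      refine ⟨{w : ℝ × ℝ | w ≠ 0}, hopen.mem_nhds h, fun w hw => ?_⟩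
      unfold gmap
      rw [if_neg hw]

lemma gmap_RS (w : ℝ × ℝ) : gmap Rm (gmap Sm w) = w := by
  by_cases h : w = 0
  · subst h; unfold gmap; simp
  · have hSw : Sm w ≠ 0 := Sm_ne_zero h
    have hNw : (0:ℝ) < Nm w := Nm_pos h
    have hNSw : (0:ℝ) < Nm (Sm w) := Nm_pos hSw
    set c : ℝ := Nm w / Nm (Sm w) with hc
    have hc0 : 0 < c := div_pos hNw hNSw
    have e1 : gmap Sm w = c • Sm w := by unfold gmap; rw [if_neg h]
    have hne : c • Sm w ≠ (0 : ℝ × ℝ) := by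
      rw [smul_ne_zero_iff]; exact ⟨ne_of_gt hc0, hSw⟩
    rw [e1]
    unfold gmap
    rw [if_neg hne]
    rw [Rm_smul, Rm_Sm, Nm_smul _ (le_of_lt hc0), Nm_smul _ (le_of_lt hc0),
      Nm_smul _ (by norm_num : (0:ℝ) ≤ 2)]
    rw [smul_smul, smul_smul]
    have : Nm (Sm w) * (c * (2 * Nm w)) ≠ 0 := by positivity
    have e2 : c * Nm (Sm w) / (c * (2 * Nm w)) * c * 2 = 1 := by
      field_simp [hc]
      rw [hc, div_mul_cancel₀ _ (ne_of_gt hNSw)]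
    rw [e2, one_smul]

lemma gmap_SR (w : ℝ × ℝ) : gmap Sm (gmap Rm w) = w := by
  by_cases h : w = 0
  · subst h; unfold gmap; simp
  · have hSw : Rm w ≠ 0 := Rm_ne_zero h
    have hNw : (0:ℝ) < Nm w := Nm_pos h
    have hNSw : (0:ℝ) < Nm (Rm w) := Nm_pos hSw
    set c : ℝ := Nm w / Nm (Rm w) with hc
    have hc0 : 0 < c := div_pos hNw hNSw
    have e1 : gmap Rm w = c • Rm w := by unfold gmap; rw [if_neg h]
    have hne : c • Rm w ≠ (0 : ℝ × ℝ) := by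
      rw [smul_ne_zero_iff]; exact ⟨ne_of_gt hc0, hSw⟩
    rw [e1]
    unfold gmap
    rw [if_neg hne]
    rw [Sm_smul, Sm_Rm, Nm_smul _ (le_of_lt hc0), Nm_smul _ (le_of_lt hc0),
      Nm_smul _ (by norm_num : (0:ℝ) ≤ 2)]
    rw [smul_smul, smul_smul]
    have e2 : c * Nm (Rm w) / (c * (2 * Nm w)) * c * 2 = 1 := by
      field_simp [hc]
      rw [hc, div_mul_cancel₀ _ (ne_of_gt hNSw)]
    rw [e2, one_smul]

end


noncomputable section

def fwd (p : UI × UI) : ℝ × ℝ := (2*(p.1:ℝ)-1, 2*(p.2:ℝ)-1)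

lemma fwd_Nm_le (p : UI × UI) : Nm (fwd p) ≤ 1 := by
  have h1 := p.1.2; have h2 := p.2.2
  simp only [Set.mem_Icc] at h1 h2
  unfold Nm fwd
  apply max_le <;> rw [abs_le] <;> constructor <;> simp <;> linarith [h1.1, h1.2, h2.1, h2.2]

lemma fwd_cont : Continuous fwd := by
  unfold fwd
  fun_prop

lemma back_mem {x : ℝ} (h : |x| ≤ 1) : (x+1)/2 ∈ Set.Icc (0:ℝ) 1 := by
  rw [abs_le] at h
  constructor <;> [linarith [h.1]; linarith [h.2]]

lemma gmapR_fst_mem (p : UI × UI) : ((gmap Rm (fwd p)).1+1)/2 ∈ Set.Icc (0:ℝ) 1 :=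
  back_mem (le_trans (Nm_fst_le _) (le_trans (le_of_eq (gmap_Nm (fun _ h => Rm_ne_zero h) _)) (fwd_Nm_le p)))
lemma gmapR_snd_mem (p : UI × UI) : ((gmap Rm (fwd p)).2+1)/2 ∈ Set.Icc (0:ℝ) 1 :=
  back_mem (le_trans (Nm_snd_le _) (le_trans (le_of_eq (gmap_Nm (fun _ h => Rm_ne_zero h) _)) (fwd_Nm_le p)))
lemma gmapS_fst_mem (p : UI × UI) : ((gmap Sm (fwd p)).1+1)/2 ∈ Set.Icc (0:ℝ) 1 :=
  back_mem (le_trans (Nm_fst_le _) (le_trans (le_of_eq (gmap_Nm (fun _ h => Sm_ne_zero h) _)) (fwd_Nm_le p)))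
lemma gmapS_snd_mem (p : UI × UI) : ((gmap Sm (fwd p)).2+1)/2 ∈ Set.Icc (0:ℝ) 1 :=
  back_mem (le_trans (Nm_snd_le _) (le_trans (le_of_eq (gmap_Nm (fun _ h => Sm_ne_zero h) _)) (fwd_Nm_le p)))

def psiR (p : UI × UI) : UI × UI :=
  (⟨((gmap Rm (fwd p)).1+1)/2, gmapR_fst_mem p⟩, ⟨((gmap Rm (fwd p)).2+1)/2, gmapR_snd_mem p⟩)

def psiS (p : UI × UI) : UI × UI :=
  (⟨((gmap Sm (fwd p)).1+1)/2, gmapS_fst_mem p⟩, ⟨((gmap Sm (fwd p)).2+1)/2, gmapS_snd_mem p⟩)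

lemma fwd_psiR (p : UI × UI) : fwd (psiR p) = gmap Rm (fwd p) := by
  refine Prod.ext ?_ ?_
  · show 2*(((gmap Rm (fwd p)).1+1)/2) - 1 = (gmap Rm (fwd p)).1; ring
  · show 2*(((gmap Rm (fwd p)).2+1)/2) - 1 = (gmap Rm (fwd p)).2; ring

lemma fwd_psiS (p : UI × UI) : fwd (psiS p) = gmap Sm (fwd p) := by
  refine Prod.ext ?_ ?_
  · show 2*(((gmap Sm (fwd p)).1+1)/2) - 1 = (gmap Sm (fwd p)).1; ring
  · show 2*(((gmap Sm (fwd p)).2+1)/2) - 1 = (gmap Sm (fwd p)).2; ring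

lemma psiS_psiR (p : UI × UI) : psiS (psiR p) = p := by
  have key : gmap Sm (fwd (psiR p)) = fwd p := by rw [fwd_psiR, gmap_SR]
  unfold psiS
  have e1 : ((gmap Sm (fwd (psiR p))).1 + 1)/2 = (p.1 : ℝ) := by
    rw [key]; show (2*(p.1:ℝ)-1+1)/2 = (p.1:ℝ); ring
  have e2 : ((gmap Sm (fwd (psiR p))).2 + 1)/2 = (p.2 : ℝ) := by
    rw [key]; show (2*(p.2:ℝ)-1+1)/2 = (p.2:ℝ); ring
  refine Prod.ext ?_ ?_ <;> [exact Subtype.ext e1; exact Subtype.ext e2]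

lemma psiR_psiS (p : UI × UI) : psiR (psiS p) = p := by
  have key : gmap Rm (fwd (psiS p)) = fwd p := by rw [fwd_psiS, gmap_RS]
  unfold psiR
  have e1 : ((gmap Rm (fwd (psiS p))).1 + 1)/2 = (p.1 : ℝ) := by
    rw [key]; show (2*(p.1:ℝ)-1+1)/2 = (p.1:ℝ); ring
  have e2 : ((gmap Rm (fwd (psiS p))).2 + 1)/2 = (p.2 : ℝ) := by
    rw [key]; show (2*(p.2:ℝ)-1+1)/2 = (p.2:ℝ); ring
  refine Prod.ext ?_ ?_ <;> [exact Subtype.ext e1; exact Subtype.ext e2]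

lemma psiR_cont : Continuous psiR := by
  unfold psiR
  have h : Continuous (fun p : UI × UI => gmap Rm (fwd p)) :=
    (gmap_cont Rm_cont (fun _ h => Rm_ne_zero h)).comp fwd_cont
  exact Continuous.prodMk
    (Continuous.subtype_mk (by fun_prop) _)
    (Continuous.subtype_mk (by fun_prop) _)

lemma psiS_cont : Continuous psiS := by
  unfold psiS
  have h : Continuous (fun p : UI × UI => gmap Sm (fwd p)) :=
    (gmap_cont Sm_cont (fun _ h => Sm_ne_zero h)).comp fwd_cont
  exact Continuous.prodMk
    (Continuous.subtype_mk (by fun_prop) _)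
    (Continuous.subtype_mk (by fun_prop) _)

/-- the corner-killer homeomorphism of the square -/
def cornerHomeo : (UI × UI) ≃ₜ (UI × UI) where
  toFun := psiR
  invFun := psiS
  left_inv := psiS_psiR
  right_inv := psiR_psiS
  continuous_toFun := psiR_cont
  continuous_invFun := psiS_cont

def z0 : UI := ⟨0, by norm_num⟩
def zhalf : UI := ⟨1/2, by norm_num⟩

lemma cornerHomeo_val : cornerHomeo (z0, z0) = (zhalf, z0) := by
  have hfwd : fwd (z0, z0) = (-1, -1) := by
    unfold fwd z0; norm_num
  have hne : ((-1 : ℝ), (-1:ℝ)) ≠ (0 : ℝ × ℝ) := by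
    intro h
    rw [Prod.ext_iff] at h
    norm_num at h
  have hg : gmap Rm (-1, -1) = ((0:ℝ), (-1:ℝ)) := by
    unfold gmap
    rw [if_neg hne]
    have h1 : Rm (-1, -1) = ((0:ℝ), (-2:ℝ)) := by unfold Rm; norm_num
    rw [h1]
    have h2 : Nm ((-1:ℝ), (-1:ℝ)) = 1 := by unfold Nm; norm_num
    have h3 : Nm ((0:ℝ), (-2:ℝ)) = 2 := by unfold Nm; norm_num
    rw [h2, h3]
    refine Prod.ext ?_ ?_ <;> simp [Prod.smul_mk] <;> norm_num
  show psiR (z0, z0) = (zhalf, z0)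
  refine Prod.ext ?_ ?_ <;> apply Subtype.ext
  · show ((gmap Rm (fwd (z0, z0))).1+1)/2 = ((1:ℝ)/2)
    rw [hfwd, hg]
    norm_num
  · show ((gmap Rm (fwd (z0, z0))).2+1)/2 = (0:ℝ)
    rw [hfwd, hg]
    norm_num

end

noncomputable section

def pairMap (a b : ℕ) (f : UI × UI → UI × UI) (z : HilbertCube) : HilbertCube :=
  fun n => if n = a then (f (z a, z b)).1 else if n = b then (f (z a, z b)).2 else z n

lemma pairMap_vals (a b : ℕ) (hab : a ≠ b) (f : UI × UI → UI × UI) (z : HilbertCube) :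
    (pairMap a b f z a, pairMap a b f z b) = f (z a, z b) := by
  unfold pairMap
  rw [if_pos rfl, if_neg (Ne.symm hab), if_pos rfl]

lemma pairMap_comp (a b : ℕ) (hab : a ≠ b) (f g : UI × UI → UI × UI) (z : HilbertCube) :
    pairMap a b g (pairMap a b f z) = pairMap a b (g ∘ f) z := by
  funext n
  show (if n = a then (g (pairMap a b f z a, pairMap a b f z b)).1
      else if n = b then (g (pairMap a b f z a, pairMap a b f z b)).2
      else pairMap a b f z n)
    = (if n = a then ((g ∘ f) (z a, z b)).1
      else if n = b then ((g ∘ f) (z a, z b)).2 else z n)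
  rw [pairMap_vals a b hab f z]
  by_cases hna : n = a
  · rw [if_pos hna, if_pos hna]; rfl
  · by_cases hnb : n = b
    · rw [if_neg hna, if_neg hna, if_pos hnb, if_pos hnb]; rfl
    · rw [if_neg hna, if_neg hna, if_neg hnb, if_neg hnb]
      unfold pairMap
      rw [if_neg hna, if_neg hnb]

lemma pairMap_id (a b : ℕ) (z : HilbertCube) : pairMap a b id z = z := by
  funext n
  unfold pairMap
  split_ifs with h1 h2 <;> simp [h1] <;> simp [h2]

lemma pairMap_cont (a b : ℕ) (f : UI × UI → UI × UI) (hf : Continuous f) :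
    Continuous (pairMap a b f) := by
  unfold pairMap
  apply continuous_pi
  intro n
  have hz : Continuous (fun z : HilbertCube => f (z a, z b)) :=
    hf.comp ((continuous_apply a).prodMk (continuous_apply b))
  by_cases hna : n = a
  · subst hna; simp only [if_pos rfl]; exact hz.fst
  · by_cases hnb : n = b
    · subst hnb; simp only [if_neg hna, if_pos rfl]; exact hz.snd
    · simp only [if_neg hna, if_neg hnb]; exact continuous_apply n

/-- homeomorphism of the Hilbert cube acting on two coordinates -/
def pairHomeo (a b : ℕ) (hab : a ≠ b) (β : (UI × UI) ≃ₜ (UI × UI)) :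
    HilbertCube ≃ₜ HilbertCube where
  toFun := pairMap a b β
  invFun := pairMap a b β.symm
  left_inv z := by
    rw [pairMap_comp a b hab]
    have : (⇑β.symm ∘ ⇑β) = id := by funext p; simp
    rw [this, pairMap_id]
  right_inv z := by
    rw [pairMap_comp a b hab]
    have : (⇑β ∘ ⇑β.symm) = id := by funext p; simp
    rw [this, pairMap_id]
  continuous_toFun := pairMap_cont a b _ β.continuous
  continuous_invFun := pairMap_cont a b _ β.symm.continuous

lemma pairHomeo_apply_a (a b : ℕ) (hab : a ≠ b) (β : (UI × UI) ≃ₜ (UI × UI)) (z : HilbertCube) :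
    pairHomeo a b hab β z a = (β (z a, z b)).1 := if_pos rfl

lemma pairHomeo_apply_other (a b : ℕ) (hab : a ≠ b) (β : (UI × UI) ≃ₜ (UI × UI)) (z : HilbertCube)
    (n : ℕ) (hna : n ≠ a) (hnb : n ≠ b) : pairHomeo a b hab β z n = z n := by
  show (if n = a then _ else if n = b then _ else z n) = z n
  rw [if_neg hna, if_neg hnb]

end

noncomputable section

lemma exists_bd_to_zero (u : UI) (hu : (u:ℝ) = 0 ∨ (u:ℝ) = 1) :
    ∃ g : UI ≃ₜ UI, g u = z0 := by
  rcases hu with h | h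
  · exact ⟨Homeomorph.refl UI, Subtype.ext h⟩
  · refine ⟨flipHomeo, Subtype.ext ?_⟩
    show (1:ℝ) - u = 0
    rw [h]; ring

lemma exists_beta (u v : UI) (t : ℝ) (ht : t ∈ Set.Ioo (0:ℝ) 1) :
    ∃ β : (UI × UI) ≃ₜ (UI × UI), ((β (u, v)).1 : ℝ) = t := by
  by_cases hu : (u:ℝ) ∈ Set.Ioo (0:ℝ) 1
  · exact ⟨(plHomeo u t hu ht).prodCongr (Homeomorph.refl UI), plHomeo_apply u t hu ht u rfl⟩
  · have hub : (u:ℝ) = 0 ∨ (u:ℝ) = 1 := by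
      obtain ⟨h0, h1⟩ := u.2
      simp only [Set.mem_Ioo, not_and_or, not_lt] at hu
      rcases hu with h | h
      · exact Or.inl (le_antisymm h h0)
      · exact Or.inr (le_antisymm h1 h)
    by_cases hv : (v:ℝ) ∈ Set.Ioo (0:ℝ) 1
    · refine ⟨(Homeomorph.prodComm UI UI).trans
        ((plHomeo v t hv ht).prodCongr (Homeomorph.refl UI)), ?_⟩
      exact plHomeo_apply v t hv ht v rfl
    · have hvb : (v:ℝ) = 0 ∨ (v:ℝ) = 1 := by
        obtain ⟨h0, h1⟩ := v.2
        simp only [Set.mem_Ioo, not_and_or, not_lt] at hv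
        rcases hv with h | h
        · exact Or.inl (le_antisymm h h0)
        · exact Or.inr (le_antisymm h1 h)
      obtain ⟨gu, hgu⟩ := exists_bd_to_zero u hub
      obtain ⟨gv, hgv⟩ := exists_bd_to_zero v hvb
      have hhalf : (1:ℝ)/2 ∈ Set.Ioo (0:ℝ) 1 := by norm_num
      refine ⟨(gu.prodCongr gv).trans (cornerHomeo.trans
        ((plHomeo (1/2) t hhalf ht).prodCongr (Homeomorph.refl UI))), ?_⟩
      have step1 : (gu.prodCongr gv) (u, v) = (z0, z0) := by
        show (gu u, gv v) = (z0, z0)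
        rw [hgu, hgv]
      show ((((plHomeo (1/2) t hhalf ht).prodCongr (Homeomorph.refl UI))
        (cornerHomeo ((gu.prodCongr gv) (u, v)))).1 : ℝ) = t
      rw [step1, cornerHomeo_val]
      show ((plHomeo (1/2) t hhalf ht zhalf : UI) : ℝ) = t
      exact plHomeo_apply (1/2) t hhalf ht zhalf rfl

lemma exists_homeo_list (l : List ℕ) (hnd : l.Nodup) (P : Finset ℕ) (t : ℕ → ℝ)
    (ht : ∀ i ∈ l, t i ∈ Set.Ioo (0:ℝ) 1) (x : HilbertCube) :
    ∃ h : HilbertCube ≃ₜ HilbertCube,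
      (∀ i ∈ l, ((h x i : UI) : ℝ) = t i) ∧
      (∀ z : HilbertCube, ∀ n ∈ P, n ∉ l → h z n = z n) := by
  induction l generalizing P x with
  | nil => exact ⟨Homeomorph.refl _, by simp, by intros; rfl⟩
  | cons i l' ih =>
    have hnd' : l'.Nodup := (List.nodup_cons.mp hnd).2
    have hil' : i ∉ l' := (List.nodup_cons.mp hnd).1
    obtain ⟨e, he⟩ := Infinite.exists_notMem_finset (insert i (P ∪ l'.toFinset))
    have hei : e ≠ i := fun h => he (by rw [h]; exact Finset.mem_insert_self _ _)
    have heP : e ∉ P := fun h => he (Finset.mem_insert_of_mem (Finset.mem_union_left _ h))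
    have hel' : e ∉ l' := fun h => he (Finset.mem_insert_of_mem
      (Finset.mem_union_right _ (List.mem_toFinset.mpr h)))
    obtain ⟨β, hβ⟩ := exists_beta (x i) (x e) (t i) (ht i (List.mem_cons_self (a := i) (l := l')))
    set g := pairHomeo i e (Ne.symm hei) β with hg
    obtain ⟨h', hh'1, hh'2⟩ := ih hnd' (insert i (insert e P))
      (fun j hj => ht j (List.mem_cons_of_mem i hj)) (g x)
    refine ⟨g.trans h', ?_, ?_⟩
    · intro j hj
      rcases List.mem_cons.mp hj with rfl | hj'
      · have fix : h' (g x) j = g x j :=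
          hh'2 (g x) j (Finset.mem_insert_self _ _) hil'
        show ((h' (g x) j : UI) : ℝ) = t j
        rw [fix, hg]
        rw [pairHomeo_apply_a]
        exact hβ
      · exact hh'1 j hj'
    · intro z n hnP hnl
      have hni : n ≠ i := fun h => hnl (h ▸ List.mem_cons_self (a := i) (l := l'))
      have hnl' : n ∉ l' := fun h => hnl (List.mem_cons_of_mem i h)
      have hne : n ≠ e := fun h => heP (h ▸ hnP)
      show h' (g z) n = z n
      rw [hh'2 (g z) n (Finset.mem_insert_of_mem (Finset.mem_insert_of_mem hnP)) hnl']
      rw [hg]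
      exact pairHomeo_apply_other i e (Ne.symm hei) β z n hni hne

lemma nonempty_interior_point (V : Set UI) (hV : IsOpen V) (w : UI) (hw : w ∈ V) :
    ∃ c : UI, (c:ℝ) ∈ Set.Ioo (0:ℝ) 1 ∧ c ∈ V := by
  obtain ⟨W, hWopen, hWeq⟩ := isOpen_induced_iff.mp hV
  have hwW : (w:ℝ) ∈ W := by rw [← hWeq] at hw; exact hw
  obtain ⟨ε, hε, hball⟩ := Metric.isOpen_iff.mp hWopen _ hwW
  set δ : ℝ := min (ε/2) (1/4) with hδdef
  have hδ0 : 0 < δ := lt_min (by linarith) (by norm_num)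
  have hδε : δ < ε := lt_of_le_of_lt (min_le_left _ _) (by linarith)
  have hδ4 : δ ≤ 1/4 := min_le_right _ _
  obtain ⟨hw0, hw1⟩ := w.2
  by_cases hc : (w:ℝ) ≤ 1/2
  · refine ⟨⟨(w:ℝ) + δ, ?_⟩, ?_, ?_⟩
    · constructor <;> [linarith; linarith]
    · constructor <;> [linarith; linarith]
    · rw [← hWeq]
      apply hball
      rw [Metric.mem_ball, Real.dist_eq]
      rw [abs_of_pos (by linarith : (0:ℝ) < (w:ℝ) + δ - w)]
      linarith
  · push_neg at hc
    refine ⟨⟨(w:ℝ) - δ, ?_⟩, ?_, ?_⟩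
    · constructor <;> [linarith; linarith]
    · constructor <;> [linarith; linarith]
    · rw [← hWeq]
      apply hball
      rw [Metric.mem_ball, Real.dist_eq]
      rw [abs_of_neg (by linarith : (w:ℝ) - δ - w < 0)]
      linarith

end

noncomputable section

lemma exists_homeo_mem (x : HilbertCube) (U : Set HilbertCube) (hU : IsOpen U)
    (hne : U.Nonempty) : ∃ h : HilbertCube ≃ₜ HilbertCube, h x ∈ U := by
  obtain ⟨u, hu⟩ := hne
  obtain ⟨I, V, hIV, hsub⟩ := isOpen_pi_iff.mp hU u hu
  have hch : ∀ i : ℕ, ∃ c : UI, i ∈ I → ((c:ℝ) ∈ Set.Ioo 0 1 ∧ c ∈ V i) := by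
    intro i
    by_cases hi : i ∈ I
    · obtain ⟨c, hc1, hc2⟩ := nonempty_interior_point (V i) (hIV i hi).1 (u i) (hIV i hi).2
      exact ⟨c, fun _ => ⟨hc1, hc2⟩⟩
    · exact ⟨zhalf, fun h => absurd h hi⟩
  choose C hC using hch
  obtain ⟨h, h1, _⟩ := exists_homeo_list I.toList I.nodup_toList ∅ (fun i => (C i : ℝ))
    (fun i hi => (hC i (Finset.mem_toList.mp hi)).1) x
  refine ⟨h, hsub ?_⟩
  rw [Set.mem_pi]
  intro i hi
  have hiI : i ∈ I := hi
  have : h x i = C i := Subtype.ext (h1 i (Finset.mem_toList.mpr hiI))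
  rw [this]
  exact (hC i hiI).2

lemma exists_finite_cover (U : Set HilbertCube) (hU : IsOpen U) (hne : U.Nonempty) :
    ∃ s : Finset (HilbertCube ≃ₜ HilbertCube), ∀ x : HilbertCube, ∃ h ∈ s, h x ∈ U := by
  classical
  choose H hH using fun x => exists_homeo_mem x U hU hne
  obtain ⟨s, hs⟩ := IsCompact.elim_finite_subcover isCompact_univ
    (fun x : HilbertCube => (H x) ⁻¹' U)
    (fun x => hU.preimage (H x).continuous)
    (fun y _ => Set.mem_iUnion.mpr ⟨y, hH y⟩)
  refine ⟨s.image H, fun x => ?_⟩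
  have hx := hs (Set.mem_univ x)
  simp only [Set.mem_iUnion] at hx
  obtain ⟨y, hys, hxy⟩ := hx
  exact ⟨H y, Finset.mem_image_of_mem H hys, hxy⟩

lemma meagre_union {X : Type*} [TopologicalSpace X] {s t : Set X}
    (hs : IsMeagre s) (ht : IsMeagre t) : IsMeagre (s ∪ t) := by
  rw [IsMeagre, Set.compl_union]
  exact Filter.inter_mem hs ht

lemma meagre_finset_biUnion {α : Type*} {X : Type*} [TopologicalSpace X] (s : Finset α)
    (f : α → Set X) (hf : ∀ a ∈ s, IsMeagre (f a)) : IsMeagre (⋃ a ∈ s, f a) := by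
  classical
  induction s using Finset.induction_on with
  | empty => simpa using IsMeagre.empty
  | insert _ _ hni ih =>
    rw [Finset.set_biUnion_insert]
    exact meagre_union (hf _ (Finset.mem_insert_self _ _))
      (ih fun a ha => hf a (Finset.mem_insert_of_mem ha))

lemma ideal_finset_biUnion {X : Type*} {α : Type*} (I : Set (Set X)) (hI : IsIdeal I)
    (s : Finset α) (f : α → Set X) (hf : ∀ a ∈ s, f a ∈ I) : (⋃ a ∈ s, f a) ∈ I := by
  classical
  induction s using Finset.induction_on with
  | empty =>
    obtain ⟨A, hA⟩ := hI.1
    simpa using hI.2.1 A hA ∅ (Set.empty_subset A)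
  | insert _ _ hni ih =>
    rw [Finset.set_biUnion_insert]
    exact hI.2.2 _ (hf _ (Finset.mem_insert_self _ _)) _
      (ih fun a ha => hf a (Finset.mem_insert_of_mem ha))

end

lemma homeo_preimage_eq_symm_image {X Y : Type*} [TopologicalSpace X] [TopologicalSpace Y]
    (h : X ≃ₜ Y) (C : Set Y) : (⇑h) ⁻¹' C = (⇑h.symm) '' C := by
  ext x
  constructor
  · intro hx
    exact ⟨h x, hx, h.symm_apply_apply x⟩
  · rintro ⟨c, hc, rfl⟩
    show h (h.symm c) ∈ C
    rw [h.apply_symm_apply]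
    exact hc

theorem meager_ideal_maximal (I : Set (Set HilbertCube))
    (hI : IsIdeal I) (hnt : NontrivialIdeal I) (hinv : TopInvariant I)
    (hbp : HasBaseWith I HasBaireProperty)
    (hM : MeagerIdeal HilbertCube ⊆ I) :
    I = MeagerIdeal HilbertCube := by
  refine Set.Subset.antisymm ?_ hM
  intro A hA
  obtain ⟨B, hBI, hbase, hBP⟩ := hbp
  obtain ⟨C, hCB, hAC⟩ := hbase A hA
  have hCI : C ∈ I := hBI hCB
  obtain ⟨U, hUopen, hUme⟩ := hBP C hCB
  by_cases hCm : IsMeagre C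
  · exact hCm.mono hAC
  exfalso
  have hUne : U.Nonempty := by
    rcases Set.eq_empty_or_nonempty U with rfl | hne
    · exact absurd (hUme.mono (by simp : C ⊆ (C \ ∅) ∪ (∅ \ C))) hCm
    · exact hne
  obtain ⟨s, hs⟩ := exists_finite_cover U hUopen hUne
  set E : Set HilbertCube := ⋃ h ∈ s, (⇑h) ⁻¹' C with hE
  have hEI : E ∈ I := by
    apply ideal_finset_biUnion I hI s _ ?_
    intro h _
    rw [← hinv h.symm]
    exact ⟨C, hCI, (homeo_preimage_eq_symm_image h C).symm ▸ rfl⟩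
  have hcompl : IsMeagre (Set.univ \ E) := by
    refine IsMeagre.mono ?_ (meagre_finset_biUnion s
      (fun h => (⇑h) ⁻¹' ((C \ U) ∪ (U \ C)))
      (fun h _ => IsMeagre.preimage_of_isOpenMap h.continuous h.isOpenMap hUme))
    intro x hx
    obtain ⟨h, hhs, hhxU⟩ := hs x
    have hnc : h x ∉ C := fun hc => hx.2 (Set.mem_biUnion hhs hc)
    exact Set.mem_biUnion hhs (Or.inr ⟨hhxU, hnc⟩)
  have huniv : Set.univ ∈ I := by
    have h1 : (Set.univ \ E) ∈ I := hM hcompl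
    have h2 := hI.2.2 E hEI _ h1
    rwa [Set.union_diff_cancel (Set.subset_univ E)] at h2
  exact hnt.2 huniv
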